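/- Fix an integer t ≥ 0 and k = 2t+1. For n > k let J = t + I where I ~ BetaBin(n−k, t+1, t+1). Then for every fixed h ∈ (0,1), E[J·lg J] = (1/2)·n·lg n − ((H_{k+1} − H_{t+1})/(2·ln 2))·n ± O(n^{1−h}) as n → ∞ (with the convention 0·lg 0 = 0). -/

import Mathlib

open scoped Classical

/-- The beta function `B(a,b) = ∫_0^1 z^(a-1) (1-z)^(b-1) dz`. -/
noncomputable def betaFun (a b : ℝ) : ℝ := ∫ z in (0:ℝ)..1, z ^ (a - 1) * (1 - z) ^ (b - 1)

/-- The regularized incomplete beta function `I_{x,y}(a,b)`. -/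
noncomputable def regIncBeta (x y a b : ℝ) : ℝ :=
  (∫ z in x..y, z ^ (a - 1) * (1 - z) ^ (b - 1)) / betaFun a b

/-- The probability `P(I = i)` for `I ~ BetaBin(n,a,b)`. -/
noncomputable def betaBinPMF (n : ℕ) (a b : ℝ) (i : ℕ) : ℝ :=
  (n.choose i : ℝ) * betaFun (a + i) (b + ((n - i : ℕ) : ℝ)) / betaFun a b

/-- The `m`-th harmonic number. -/
noncomputable def harm (m : ℕ) : ℝ := ∑ i ∈ Finset.range m, (1 : ℝ) / (i + 1)


lemma integral_pow_mul_one_sub_pow (q : ℕ) : ∀ p : ℕ,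
    ∫ z in (0:ℝ)..1, z ^ p * (1 - z) ^ q
      = (p.factorial * q.factorial : ℝ) / (p + q + 1).factorial := by
  induction q with
  | zero =>
    intro p
    simp only [pow_zero, mul_one, integral_pow, one_pow, Nat.factorial]
    have hp : (p.factorial : ℝ) ≠ 0 := Nat.cast_ne_zero.2 (Nat.factorial_ne_zero _)
    rw [zero_pow (by omega : p + 1 ≠ 0)]
    push_cast
    field_simp
    norm_num
  | succ q ih =>
    intro p
    have hint : ∀ r s : ℕ, IntervalIntegrable (fun z : ℝ => z ^ r * (1 - z) ^ s)
        MeasureTheory.volume 0 1 := by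
      intro r s
      exact (Continuous.mul (continuous_pow r) ((continuous_const.sub continuous_id).pow s)).intervalIntegrable 0 1
    have key : (fun z : ℝ => z ^ p * (1 - z) ^ (q+1))
        = fun z : ℝ => z ^ p * (1 - z) ^ q - z ^ (p+1) * (1 - z) ^ q := by
      funext z; ring
    rw [key, intervalIntegral.integral_sub (hint p q) (hint (p+1) q), ih p, ih (p+1)]
    have h1 : ((p + q + 1).factorial : ℝ) ≠ 0 := Nat.cast_ne_zero.2 (Nat.factorial_ne_zero _)
    have h2 : ((p + (q+1) + 1).factorial : ℝ) ≠ 0 := Nat.cast_ne_zero.2 (Nat.factorial_ne_zero _)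
    have e1 : (p + (q+1) + 1) = (p + q + 1) + 1 := by ring
    have e2 : ((p+1) + q + 1) = (p + q + 1) + 1 := by ring
    rw [e1, e2]
    have hf : (((p + q + 1) + 1).factorial : ℝ) = ((p+q+1)+1 : ℕ) * (p+q+1).factorial := by
      rw [Nat.factorial_succ]; push_cast; ring
    rw [hf]
    have hp1 : ((p+1).factorial : ℝ) = (p+1) * p.factorial := by
      rw [Nat.factorial_succ]; push_cast; ring
    have hq1 : ((q+1).factorial : ℝ) = (q+1) * q.factorial := by
      rw [Nat.factorial_succ]; push_cast; ring
    rw [hp1, hq1]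
    field_simp
    push_cast
    ring

lemma betaFun_nat (p q : ℕ) : betaFun ((p:ℝ)+1) ((q:ℝ)+1)
    = (p.factorial * q.factorial : ℝ) / (p + q + 1).factorial := by
  rw [← integral_pow_mul_one_sub_pow q p, betaFun]
  congr 1
  funext z
  rw [add_sub_cancel_right, add_sub_cancel_right, Real.rpow_natCast, Real.rpow_natCast]

lemma harm_succ (m : ℕ) : harm (m+1) = harm m + 1/(m+1) := by
  rw [harm, harm, Finset.sum_range_succ]

lemma harm_zero : harm 0 = 0 := by simp [harm]

lemma harm_nonneg (m : ℕ) : 0 ≤ harm m := by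
  apply Finset.sum_nonneg; intro i _; positivity

lemma vandermonde_upper (b : ℕ) : ∀ a n : ℕ,
    ∑ y ∈ Finset.range (n+1), (y.choose a) * ((n - y).choose b) = (n+1).choose (a+b+1) := by
  induction b with
  | zero =>
    intro a n
    induction n with
    | zero => simp [Nat.choose]
    | succ n ihn =>
      rw [Finset.sum_range_succ]
      have e : ∀ y ∈ Finset.range (n+1),
          (y.choose a) * ((n+1-y).choose 0) = (y.choose a) * ((n-y).choose 0) := by
        intro y hy; simp
      rw [Finset.sum_congr rfl e, ihn]
      simp only [Nat.sub_self, Nat.choose_self, mul_one, Nat.choose_zero_right] at *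
      rw [Nat.choose_succ_succ (n+1) (a+0), Nat.add_comm]
      simp
  | succ b ihb =>
    intro a n
    induction n with
    | zero =>
      simp [Nat.choose_eq_zero_of_lt (by omega : 1 < a+(b+1)+1), Nat.choose]
    | succ n ihn =>
      rw [Finset.sum_range_succ, Nat.sub_self, Nat.choose_zero_succ, mul_zero, add_zero]
      have step : ∀ y ∈ Finset.range (n+1),
          (y.choose a) * ((n + 1 - y).choose (b+1))
            = (y.choose a) * ((n-y).choose b) + (y.choose a) * ((n-y).choose (b+1)) := by
        intro y hy
        rw [Finset.mem_range] at hy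
        have : n + 1 - y = (n - y) + 1 := by omega
        rw [this, Nat.choose_succ_succ, Nat.mul_add]
      rw [Finset.sum_congr rfl step, Finset.sum_add_distrib, ihb a n, ihn]
      have : a + (b+1) + 1 = (a + b + 1) + 1 := by omega
      rw [this, ← Nat.choose_succ_succ]

lemma cast_pascal (n s : ℕ) : ((n+1).choose (s+1) : ℝ) = (n.choose s) + (n.choose (s+1)) := by
  rw [Nat.choose_succ_succ]; push_cast; ring

lemma cast_absorb (n s : ℕ) : ((n+1):ℝ) * (n.choose s) = ((s:ℝ)+1) * ((n+1).choose (s+1)) := by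
  have := Nat.add_one_mul_choose_eq n s
  have : ((n+1) * n.choose s : ℕ) = ((n+1).choose (s+1) * (s+1) : ℕ) := this
  have h2 := congrArg (fun x : ℕ => (x : ℝ)) this
  push_cast at h2
  linarith

lemma vandermonde_harm (b : ℕ) : ∀ a n : ℕ,
    ∑ y ∈ Finset.range (n+1), (y.choose a : ℝ) * ((n - y).choose b) * harm y
      = ((n+1).choose (a+b+1) : ℝ) * (harm (n+1) - harm (a+b+1) + harm a) := by
  induction b with
  | zero =>
    intro a n
    induction n with
    | zero =>
      match a with
      | 0 => simp [harm_zero, harm]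
      | a+1 => simp [harm_zero, Nat.choose_eq_zero_of_lt (by omega : 1 < a+1+0+1)]
    | succ n ihn =>
      simp only [Nat.add_zero] at ihn ⊢
      rw [Finset.sum_range_succ]
      have e : ∀ y ∈ Finset.range (n+1),
          (y.choose a : ℝ) * ((n+1-y).choose 0) * harm y
            = (y.choose a : ℝ) * ((n-y).choose 0) * harm y := by
        intro y hy; simp
      rw [Finset.sum_congr rfl e, ihn]
      simp only [Nat.sub_self, Nat.choose_zero_right, Nat.cast_one, mul_one]
      have hP := cast_pascal (n+1) a
      have key : ((n+1).choose a : ℝ) * (1/((a:ℝ)+1))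
          = ((n+1+1).choose (a+1) : ℝ) * (1/((n:ℝ)+2)) := by
        have hQ := cast_absorb (n+1) a
        push_cast at hQ
        rw [mul_one_div, mul_one_div, div_eq_div_iff (by positivity) (by positivity)]
        linarith
      rw [harm_succ (n+1), harm_succ a]
      push_cast at hP key ⊢
      linear_combination (1/((a:ℝ)+1) - harm (n+1)) * hP + key
  | succ b ihb =>
    intro a n
    induction n with
    | zero =>
      simp [harm_zero, Nat.choose_eq_zero_of_lt (by omega : 1 < a+(b+1)+1)]
    | succ n ihn =>
      rw [Finset.sum_range_succ, Nat.sub_self]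
      have hz : ((0:ℕ).choose (b+1) : ℝ) = 0 := by simp
      rw [hz, mul_zero, zero_mul, add_zero]
      have step : ∀ y ∈ Finset.range (n+1),
          (y.choose a : ℝ) * ((n + 1 - y).choose (b+1)) * harm y
            = (y.choose a : ℝ) * ((n-y).choose b) * harm y
              + (y.choose a : ℝ) * ((n-y).choose (b+1)) * harm y := by
        intro y hy
        rw [Finset.mem_range] at hy
        have hy' : n + 1 - y = (n - y) + 1 := by omega
        rw [hy', Nat.choose_succ_succ]
        push_cast; ring
      rw [Finset.sum_congr rfl step, Finset.sum_add_distrib, ihb a n, ihn]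
      have hP := cast_pascal (n+1) (a+b+1)
      have key : ((n+1).choose (a+b+1) : ℝ) * (1/((a:ℝ)+(b:ℝ)+2))
          = ((n+1+1).choose (a+b+1+1) : ℝ) * (1/((n:ℝ)+2)) := by
        have hQ := cast_absorb (n+1) (a+b+1)
        push_cast at hQ
        rw [mul_one_div, mul_one_div, div_eq_div_iff (by positivity) (by positivity)]
        linarith
      have e1 : a + (b+1) + 1 = (a+b+1) + 1 := by omega
      rw [e1, harm_succ (n+1), harm_succ (a+b+1)]
      push_cast at hP key ⊢
      linear_combination (harm (a+b+1) + 1/((a:ℝ)+(b:ℝ)+2) - harm (n+1) - harm a) * hP + key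

lemma log_succ_bounds (n : ℕ) (hn : 1 ≤ n) :
    1/((n:ℝ)+1) ≤ Real.log (n+1) - Real.log n ∧ Real.log (n+1) - Real.log n ≤ 1/(n:ℝ) := by
  have hn0 : (0:ℝ) < n := by exact_mod_cast hn
  have hn1 : (0:ℝ) < (n:ℝ)+1 := by positivity
  constructor
  · have h := Real.log_le_sub_one_of_pos (show (0:ℝ) < (n:ℝ)/((n:ℝ)+1) by positivity)
    rw [Real.log_div (ne_of_gt hn0) (ne_of_gt hn1)] at h
    have e : (n:ℝ)/((n:ℝ)+1) - 1 = -(1/((n:ℝ)+1)) := by field_simp; ring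
    rw [e] at h
    linarith
  · have h := Real.log_le_sub_one_of_pos (show (0:ℝ) < ((n:ℝ)+1)/(n:ℝ) by positivity)
    rw [Real.log_div (ne_of_gt hn1) (ne_of_gt hn0)] at h
    have e : ((n:ℝ)+1)/(n:ℝ) - 1 = 1/(n:ℝ) := by field_simp; ring
    rw [e] at h
    linarith

lemma harm_log_bounds (x : ℕ) (hx : 1 ≤ x) : ∀ n, x ≤ n →
    harm n - harm x ≤ Real.log n - Real.log x ∧
    Real.log n - Real.log x - (harm n - harm x) ≤ 1/(x:ℝ) - 1/(n:ℝ) := by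
  intro n hxn
  induction n, hxn using Nat.le_induction with
  | base => constructor <;> simp
  | succ n hxn ih =>
    obtain ⟨ih1, ih2⟩ := ih
    obtain ⟨l1, l2⟩ := log_succ_bounds n (le_trans hx hxn)
    rw [harm_succ]
    push_cast
    constructor
    · linarith
    · have h1n : 1/((n:ℝ)+1) ≤ 1/(n:ℝ) := by
        have hn0 : (0:ℝ) < n := by exact_mod_cast le_trans hx hxn
        rw [div_le_div_iff₀ (by positivity) hn0]
        linarith
      linarith

lemma err_bounds (n x : ℕ) (hxn : x ≤ n) (hn : 1 ≤ n) :
    0 ≤ (x:ℝ) * Real.log n + (x:ℝ)*(harm x - harm n) - (x:ℝ)*Real.log x ∧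
    (x:ℝ) * Real.log n + (x:ℝ)*(harm x - harm n) - (x:ℝ)*Real.log x ≤ 1 := by
  rcases Nat.eq_zero_or_pos x with hx | hx
  · subst hx; norm_num
  · obtain ⟨b1, b2⟩ := harm_log_bounds x hx n hxn
    have hx0 : (0:ℝ) < x := by exact_mod_cast hx
    have hn0 : (0:ℝ) < n := by exact_mod_cast hn
    constructor
    · have : 0 ≤ (x:ℝ) * ((Real.log n - Real.log x) - (harm n - harm x)) := by
        apply mul_nonneg (le_of_lt hx0); linarith
      linarith [this]
    · have h2 : (x:ℝ) * ((Real.log n - Real.log x) - (harm n - harm x)) ≤ (x:ℝ)*(1/(x:ℝ) - 1/(n:ℝ)) := by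
        apply mul_le_mul_of_nonneg_left b2 (le_of_lt hx0)
      have h3 : (x:ℝ)*(1/(x:ℝ) - 1/(n:ℝ)) ≤ 1 := by
        rw [mul_sub, mul_one_div, div_self (ne_of_gt hx0)]
        have : 0 ≤ (x:ℝ)*(1/(n:ℝ)) := by positivity
        linarith
      nlinarith

lemma M0 (t n : ℕ) (hn : 1 ≤ n) :
    ∑ x ∈ Finset.range n, ((x.choose t : ℕ) : ℝ) * (((n-1-x).choose t : ℕ) : ℝ)
      = ((n.choose (2*t+1) : ℕ) : ℝ) := by
  have h := vandermonde_upper t t (n-1)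
  have e1 : n - 1 + 1 = n := by omega
  rw [e1] at h
  have e2 : t + t + 1 = 2*t+1 := by omega
  rw [e2] at h
  rw [← h]
  push_cast
  rfl

lemma M2 (t n : ℕ) (hn : 1 ≤ n) :
    ∑ x ∈ Finset.range n, ((x.choose t : ℕ) : ℝ) * (((n-1-x).choose t : ℕ) : ℝ) * harm x
      = ((n.choose (2*t+1) : ℕ) : ℝ) * (harm n - harm (2*t+1) + harm t) := by
  have h := vandermonde_harm t t (n-1)
  have e1 : n - 1 + 1 = n := by omega
  rw [e1] at h
  have e2 : t + t + 1 = 2*t+1 := by omega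
  rw [e2] at h
  exact h

lemma M1 (t n : ℕ) :
    ∑ x ∈ Finset.range n, ((x.choose t : ℕ) : ℝ) * (((n-1-x).choose t : ℕ) : ℝ) * ((x:ℝ)+1)
      = ((t:ℝ)+1) * (((n+1).choose (2*t+2) : ℕ) : ℝ) := by
  have step : ∀ x ∈ Finset.range n,
      ((x.choose t : ℕ) : ℝ) * (((n-1-x).choose t : ℕ) : ℝ) * ((x:ℝ)+1)
        = ((t:ℝ)+1) * (((x+1).choose (t+1) : ℕ) : ℝ) * (((n-(x+1)).choose t : ℕ) : ℝ) := by
    intro x hx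
    have habs := cast_absorb x t
    have e : n - 1 - x = n - (x+1) := by omega
    rw [e]
    linear_combination ((((n-(x+1)).choose t : ℕ) : ℝ)) * habs
  rw [Finset.sum_congr rfl step]
  have e3 : ∑ x ∈ Finset.range n, ((t:ℝ)+1) * (((x+1).choose (t+1) : ℕ) : ℝ) * (((n-(x+1)).choose t : ℕ) : ℝ)
      = ((t:ℝ)+1) * ∑ y ∈ Finset.range (n+1), ((y.choose (t+1) : ℕ) : ℝ) * (((n-y).choose t : ℕ) : ℝ) := by
    rw [Finset.mul_sum, Finset.sum_range_succ' (fun y => ((t:ℝ)+1) * (((y.choose (t+1) : ℕ) : ℝ) * (((n-y).choose t : ℕ) : ℝ))) n]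
    simp [mul_assoc]
  rw [e3]
  have h := vandermonde_upper t (t+1) n
  have e2 : t + 1 + t + 1 = 2*t+2 := by omega
  rw [e2] at h
  have : ∑ y ∈ Finset.range (n+1), ((y.choose (t+1) : ℕ) : ℝ) * (((n-y).choose t : ℕ) : ℝ)
      = (((n+1).choose (2*t+2) : ℕ) : ℝ) := by
    rw [← h]; push_cast; rfl
  rw [this]

lemma M3 (t n : ℕ) :
    ∑ x ∈ Finset.range n, ((x.choose t : ℕ) : ℝ) * (((n-1-x).choose t : ℕ) : ℝ) * (((x:ℝ)+1) * harm (x+1))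
      = ((t:ℝ)+1) * (((n+1).choose (2*t+2) : ℕ) : ℝ) * (harm (n+1) - harm (2*t+2) + harm (t+1)) := by
  have step : ∀ x ∈ Finset.range n,
      ((x.choose t : ℕ) : ℝ) * (((n-1-x).choose t : ℕ) : ℝ) * (((x:ℝ)+1) * harm (x+1))
        = ((t:ℝ)+1) * ((((x+1).choose (t+1) : ℕ) : ℝ) * (((n-(x+1)).choose t : ℕ) : ℝ) * harm (x+1)) := by
    intro x hx
    have habs := cast_absorb x t
    have e : n - 1 - x = n - (x+1) := by omega
    rw [e]
    linear_combination ((((n-(x+1)).choose t : ℕ) : ℝ) * harm (x+1)) * habs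
  rw [Finset.sum_congr rfl step, ← Finset.mul_sum]
  have e4 : ∑ x ∈ Finset.range n, (((x+1).choose (t+1) : ℕ) : ℝ) * (((n-(x+1)).choose t : ℕ) : ℝ) * harm (x+1)
      = ∑ y ∈ Finset.range (n+1), ((y.choose (t+1) : ℕ) : ℝ) * (((n-y).choose t : ℕ) : ℝ) * harm y := by
    rw [Finset.sum_range_succ' (fun y => ((y.choose (t+1) : ℕ) : ℝ) * (((n-y).choose t : ℕ) : ℝ) * harm y) n]
    simp [harm_zero]
  rw [e4]
  have h := vandermonde_harm t (t+1) n
  have e2 : t + 1 + t + 1 = 2*t+2 := by omega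
  rw [e2] at h
  rw [h]
  ring

lemma pmf_eq (t n i : ℕ) (hn : 2*t+1 ≤ n) (hi : i ≤ n - (2*t+1)) :
    betaBinPMF (n-(2*t+1)) ((t:ℝ)+1) ((t:ℝ)+1) i
      = (((t+i).choose t : ℕ):ℝ) * (((n-1-(t+i)).choose t : ℕ):ℝ) / ((n.choose (2*t+1):ℕ):ℝ) := by
  set m := n - (2*t+1) with hm
  have hmn : m + (2*t+1) = n := by omega
  rw [betaBinPMF]
  have e1 : (t:ℝ)+1+(i:ℝ) = (((t+i : ℕ)):ℝ)+1 := by push_cast; ring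
  have e2 : (t:ℝ)+1+(((m-i : ℕ)):ℝ) = (((t+(m-i) : ℕ)):ℝ)+1 := by push_cast; ring
  have e3 : (t:ℝ)+1 = (((t : ℕ)):ℝ)+1 := rfl
  rw [e1, e2, e3, betaFun_nat, betaFun_nat]
  have e4 : t + i + (t + (m-i)) + 1 = n := by omega
  have e5 : t + t + 1 = 2*t+1 := by omega
  rw [e4, e5]
  have c1 : ((m.choose i : ℕ):ℝ) = (m.factorial : ℝ) / (i.factorial * (m-i).factorial) :=
    Nat.cast_choose ℝ hi
  have c2 : (((t+i).choose t : ℕ):ℝ) = ((t+i).factorial : ℝ) / (t.factorial * i.factorial) := by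
    rw [Nat.cast_choose ℝ (by omega : t ≤ t+i)]
    rw [show t+i-t = i by omega]
  have c3 : (((n-1-(t+i)).choose t : ℕ):ℝ)
      = ((t+(m-i)).factorial : ℝ) / (t.factorial * (m-i).factorial) := by
    have e6 : n-1-(t+i) = t+(m-i) := by omega
    rw [e6, Nat.cast_choose ℝ (by omega : t ≤ t+(m-i))]
    rw [show t+(m-i)-t = m-i by omega]
  have c4 : ((n.choose (2*t+1) : ℕ):ℝ) = (n.factorial : ℝ) / ((2*t+1).factorial * m.factorial) := by
    rw [Nat.cast_choose ℝ (by omega : 2*t+1 ≤ n)]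
  rw [c1, c2, c3, c4]
  have f1 : (m.factorial : ℝ) ≠ 0 := Nat.cast_ne_zero.2 (Nat.factorial_ne_zero _)
  have f2 : (i.factorial : ℝ) ≠ 0 := Nat.cast_ne_zero.2 (Nat.factorial_ne_zero _)
  have f3 : ((m-i).factorial : ℝ) ≠ 0 := Nat.cast_ne_zero.2 (Nat.factorial_ne_zero _)
  have f4 : (t.factorial : ℝ) ≠ 0 := Nat.cast_ne_zero.2 (Nat.factorial_ne_zero _)
  have f5 : ((t+i).factorial : ℝ) ≠ 0 := Nat.cast_ne_zero.2 (Nat.factorial_ne_zero _)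
  have f6 : ((t+(m-i)).factorial : ℝ) ≠ 0 := Nat.cast_ne_zero.2 (Nat.factorial_ne_zero _)
  have f7 : (n.factorial : ℝ) ≠ 0 := Nat.cast_ne_zero.2 (Nat.factorial_ne_zero _)
  have f8 : ((2*t+1).factorial : ℝ) ≠ 0 := Nat.cast_ne_zero.2 (Nat.factorial_ne_zero _)
  field_simp

set_option maxHeartbeats 1000000 in
/-- For `J = t + I`, `I ~ BetaBin(n−k, t+1, t+1)` with `k = 2t+1`, and any fixed `h ∈ (0,1)`,
`E[J·lg J] = (1/2)·n·lg n − ((H_{k+1} − H_{t+1})/(2·ln 2))·n ± O(n^{1−h})`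
(with the convention `0·lg 0 = 0`, which holds since `Real.logb 2 0 = 0`). -/
theorem E_J_lg_J (t : ℕ) (h : ℝ) (h0 : 0 < h) (h1 : h < 1) :
    ∃ C : ℝ, ∃ N : ℕ, ∀ n ≥ N,
      |(∑ i ∈ Finset.range (n - (2 * t + 1) + 1),
          betaBinPMF (n - (2 * t + 1)) ((t : ℝ) + 1) ((t : ℝ) + 1) i *
            (((t + i : ℕ) : ℝ) * Real.logb 2 ((t + i : ℕ) : ℝ)))
        - ((1/2) * n * Real.logb 2 n
            - ((harm (2 * t + 2) - harm (t + 1)) / (2 * Real.log 2)) * n)|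
      ≤ C * (n : ℝ) ^ (1 - h) := by
  have hlog2 : 0 < Real.log 2 := Real.log_pos (by norm_num)
  set K : ℝ := 1/2 + (harm (2*t+2) + harm (t+1))/2 + harm (2*t+1) + harm t + 1 with hK
  have hK0 : 0 ≤ K := by
    have := harm_nonneg (2*t+2); have := harm_nonneg (t+1)
    have := harm_nonneg (2*t+1); have := harm_nonneg t
    positivity
  refine ⟨(1/Real.log 2) * ((1 + K) + 1/(2*(1-h))), 2*t+3, ?_⟩
  intro n hn
  set m := n - (2*t+1) with hmdef
  have hm : m + (2*t+1) = n := by omega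
  have hn1 : 1 ≤ n := by omega
  set W : ℝ := ((n.choose (2*t+1) : ℕ):ℝ) with hWdef
  have hW : 0 < W := by
    rw [hWdef]
    exact_mod_cast Nat.choose_pos (show 2*t+1 ≤ n by omega)
  have hWne : W ≠ 0 := ne_of_gt hW
  have hlog2ne : Real.log 2 ≠ 0 := ne_of_gt hlog2
  set wr : ℕ → ℝ := fun x => ((x.choose t : ℕ):ℝ) * (((n-1-x).choose t : ℕ):ℝ) with hwr
  have hwr0 : ∀ x, 0 ≤ wr x := by
    intro x
    rw [hwr]
    positivity
  set G : ℕ → ℝ := fun x => wr x * ((x:ℝ) * Real.log x) with hG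
  -- Step A : identify the sum
  have stepA : (∑ i ∈ Finset.range (m + 1),
          betaBinPMF m ((t : ℝ) + 1) ((t : ℝ) + 1) i *
            (((t + i : ℕ) : ℝ) * Real.logb 2 ((t + i : ℕ) : ℝ)))
      = (∑ x ∈ Finset.range n, G x) / (W * Real.log 2) := by
    have perterm : ∀ i ∈ Finset.range (m+1),
        betaBinPMF m ((t : ℝ) + 1) ((t : ℝ) + 1) i *
            (((t + i : ℕ) : ℝ) * Real.logb 2 ((t + i : ℕ) : ℝ))
          = G (t+i) / (W * Real.log 2) := by
      intro i hi
      rw [Finset.mem_range] at hi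
      rw [hmdef, pmf_eq t n i (by omega) (by omega)]
      rw [show G (t+i) = wr (t+i) * ((((t+i):ℕ):ℝ) * Real.log (((t+i):ℕ):ℝ)) from rfl,
        show wr (t+i) = (((t+i).choose t : ℕ):ℝ) * ((((n-1-(t+i)).choose t : ℕ)):ℝ) from rfl,
        Real.logb, ← hWdef]
      field_simp
    rw [Finset.sum_congr rfl perterm, ← Finset.sum_div]
    congr 1
    -- reindex
    have hzero1 : ∀ x < t, G x = 0 := by
      intro x hx
      have hz : x.choose t = 0 := Nat.choose_eq_zero_of_lt hx
      rw [hG]; simp only []; rw [hwr]; simp [hz]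
    have h1' : ∑ x ∈ Finset.range (t+(m+1)), G x = ∑ x ∈ Finset.range n, G x := by
      apply Finset.sum_subset (Finset.range_subset_range.2 (by omega))
      intro x hx hnx
      rw [Finset.mem_range] at hx
      rw [Finset.mem_range, not_lt] at hnx
      have hz : (n-1-x).choose t = 0 := Nat.choose_eq_zero_of_lt (by omega)
      rw [hG]; simp only []; rw [hwr]; simp [hz]
    rw [← h1']
    rw [← Finset.sum_range_add_sum_Ico G (show t ≤ t+(m+1) by omega)]
    have hz : ∑ x ∈ Finset.range t, G x = 0 :=
      Finset.sum_eq_zero (fun x hx => hzero1 x (Finset.mem_range.1 hx))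
    rw [hz, zero_add, Finset.sum_Ico_eq_sum_range]
    rw [show t + (m+1) - t = m+1 by omega]
  -- Step B : moments
  have hM0 : ∑ x ∈ Finset.range n, wr x = W := M0 t n hn1
  have habs : ((t:ℝ)+1) * (((n+1).choose (2*t+2) : ℕ):ℝ) = (((n:ℝ)+1)/2) * W := by
    have hq := cast_absorb n (2*t+1)
    rw [hWdef]
    push_cast at hq ⊢
    linarith
  have hE1 : ∑ x ∈ Finset.range n, wr x * (x:ℝ) = (((n:ℝ)+1)/2) * W - W := by
    have e : ∀ x ∈ Finset.range n, wr x * (x:ℝ) = wr x * ((x:ℝ)+1) - wr x := by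
      intro x _; ring
    rw [Finset.sum_congr rfl e, Finset.sum_sub_distrib, M1 t n, hM0, habs]
  have hE2 : ∑ x ∈ Finset.range n, wr x * harm x = W * (harm n - harm (2*t+1) + harm t) :=
    M2 t n hn1
  have hE3 : ∑ x ∈ Finset.range n, wr x * ((x:ℝ) * harm x)
      = (((n:ℝ)+1)/2) * W * (harm (n+1) - harm (2*t+2) + harm (t+1))
        - W * (harm n - harm (2*t+1) + harm t) - W := by
    have e : ∀ x ∈ Finset.range n, wr x * ((x:ℝ) * harm x)
        = wr x * (((x:ℝ)+1) * harm (x+1)) - wr x * harm x - wr x := by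
      intro x _
      rw [harm_succ x]
      have hx0 : ((x:ℝ)+1) ≠ 0 := by positivity
      field_simp
      ring
    rw [Finset.sum_congr rfl e, Finset.sum_sub_distrib, Finset.sum_sub_distrib,
      M3 t n, hM0, hE2, habs]
  -- Step C : error bound
  set SL : ℝ := ∑ x ∈ Finset.range n, G x with hSL
  set SB : ℝ := ∑ x ∈ Finset.range n,
      wr x * ((x:ℝ)*Real.log n + (x:ℝ)*(harm x - harm n)) with hSB
  have hErr : |SL - SB| ≤ W := by
    rw [hSL, hSB, ← Finset.sum_sub_distrib]
    calc |∑ x ∈ Finset.range n, (G x - wr x * ((x:ℝ)*Real.log n + (x:ℝ)*(harm x - harm n)))|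
        ≤ ∑ x ∈ Finset.range n, |G x - wr x * ((x:ℝ)*Real.log n + (x:ℝ)*(harm x - harm n))| :=
          Finset.abs_sum_le_sum_abs _ _
      _ ≤ ∑ x ∈ Finset.range n, wr x := by
          apply Finset.sum_le_sum
          intro x hx
          rw [Finset.mem_range] at hx
          obtain ⟨b1, b2⟩ := err_bounds n x (le_of_lt hx) hn1
          have e : G x - wr x * ((x:ℝ)*Real.log n + (x:ℝ)*(harm x - harm n))
              = - (wr x * ((x:ℝ)*Real.log n + (x:ℝ)*(harm x - harm n) - (x:ℝ)*Real.log x)) := by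
            rw [hG]; ring
          rw [e, abs_neg, abs_mul, abs_of_nonneg (hwr0 x)]
          have hb : |(x:ℝ)*Real.log n + (x:ℝ)*(harm x - harm n) - (x:ℝ)*Real.log x| ≤ 1 := by
            rw [abs_le]; constructor <;> linarith
          nlinarith [hwr0 x, hb,
            abs_nonneg ((x:ℝ)*Real.log n + (x:ℝ)*(harm x - harm n) - (x:ℝ)*Real.log x)]
      _ = W := hM0
  have hSBval : SB = Real.log n * ((((n:ℝ)+1)/2) * W - W)
      + ((((n:ℝ)+1)/2) * W * (harm (n+1) - harm (2*t+2) + harm (t+1))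
        - W * (harm n - harm (2*t+1) + harm t) - W)
      - harm n * ((((n:ℝ)+1)/2) * W - W) := by
    rw [hSB]
    have e : ∀ x ∈ Finset.range n,
        wr x * ((x:ℝ)*Real.log n + (x:ℝ)*(harm x - harm n))
          = Real.log n * (wr x * (x:ℝ)) + wr x * ((x:ℝ) * harm x) - harm n * (wr x * (x:ℝ)) := by
      intro x _; ring
    rw [Finset.sum_congr rfl e]
    rw [Finset.sum_sub_distrib, Finset.sum_add_distrib, ← Finset.mul_sum, ← Finset.mul_sum,
      hE1, hE3]
  -- Step D : conclusion
  clear_value SL SB W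
  rw [stepA]
  set M' : ℝ := (1/2)*(n:ℝ)*Real.log n - ((n:ℝ)/2)*(harm (2*t+2) - harm (t+1)) with hM'
  clear_value M'
  have hgoalM : (1/2) * (n:ℝ) * Real.logb 2 n
      - ((harm (2 * t + 2) - harm (t + 1)) / (2 * Real.log 2)) * n = M' / Real.log 2 := by
    rw [Real.logb, hM']
    field_simp
  rw [hgoalM]
  set R : ℝ := 1/2 - (1/2)*(harm (2*t+2) - harm (t+1)) + harm (2*t+1) - harm t - 1 with hRdef
  have key : |SL / W - M'| ≤ (1 + K) + (1/2)*Real.log n := by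
    have hSBkey : SB = W * (M' - (1/2)*Real.log n + R) := by
      rw [hSBval, hM', hRdef, harm_succ n]
      have hn0 : ((n:ℝ)+1) ≠ 0 := by positivity
      field_simp
      ring
    have hR : SB / W = M' - (1/2)*Real.log n + R := by
      rw [hSBkey, mul_comm W, mul_div_assoc, div_self hWne, mul_one]
    have h1' : |SL/W - SB/W| ≤ 1 := by
      rw [div_sub_div_same, abs_div, abs_of_pos hW, div_le_one hW]
      exact hErr
    have h2' : |SB/W - M'| ≤ K + (1/2)*Real.log n := by
      rw [hR]
      have hlogn : 0 ≤ Real.log n := Real.log_nonneg (by exact_mod_cast hn1)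
      have hh1 := harm_nonneg (2*t+2); have hh2 := harm_nonneg (t+1)
      have hh3 := harm_nonneg (2*t+1); have hh4 := harm_nonneg t
      rw [abs_le, hRdef, hK]
      constructor <;> nlinarith
    calc |SL/W - M'| ≤ |SL/W - SB/W| + |SB/W - M'| := abs_sub_le _ _ _
      _ ≤ (1 + K) + (1/2)*Real.log n := by linarith
  have hrpow1 : (1:ℝ) ≤ (n:ℝ) ^ (1-h) :=
    Real.one_le_rpow (by exact_mod_cast hn1) (by linarith)
  have hrpow2 : Real.log n ≤ (n:ℝ) ^ (1-h) / (1-h) :=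
    Real.log_le_rpow_div (Nat.cast_nonneg n) (by linarith)
  have hfin : |SL / W - M'| ≤ ((1 + K) + 1/(2*(1-h))) * (n:ℝ) ^ (1-h) := by
    have ha : (1 + K) ≤ (1 + K) * (n:ℝ) ^ (1-h) := by nlinarith
    have hb : (1/2)*Real.log n ≤ (1/(2*(1-h))) * (n:ℝ) ^ (1-h) := by
      have h1h : 0 < 1 - h := by linarith
      calc (1/2)*Real.log n ≤ (1/2)*((n:ℝ)^(1-h)/(1-h)) := by linarith
        _ = (1/(2*(1-h))) * (n:ℝ)^(1-h) := by
            rw [show (1:ℝ)/(2*(1-h)) = 2⁻¹ * (1-h)⁻¹ by rw [one_div, mul_inv]]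
            ring
    calc |SL / W - M'| ≤ (1 + K) + (1/2)*Real.log n := key
      _ ≤ (1 + K) * (n:ℝ)^(1-h) + (1/(2*(1-h))) * (n:ℝ)^(1-h) := add_le_add ha hb
      _ = ((1 + K) + 1/(2*(1-h))) * (n:ℝ) ^ (1-h) := by ring
  have hsplit : SL / (W * Real.log 2) - M' / Real.log 2 = (SL/W - M')/Real.log 2 := by
    rw [sub_div, div_div]
  rw [hsplit, abs_div, abs_of_pos hlog2, div_le_iff₀ hlog2]
  have hfin2 : 1/Real.log 2 * ((1 + K) + 1/(2*(1-h))) * (n:ℝ)^(1-h) * Real.log 2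
      = ((1+K) + 1/(2*(1-h))) * (n:ℝ)^(1-h) := by
    field_simp
  rw [hfin2]
  exact hfin
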